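/- Let B be an n×n real matrix with a QR factorization B = V·R, where V is orthogonal and R is upper triangular, and let 1 ≤ r ≤ n be such that the leading block R(1:r,1:r) is invertible. Then σ_min(V(1:r,1:r)) ≥ σ_min(B(1:r,1:r)) / ‖B(1:n,1:r)‖_F, where B(1:n,1:r) denotes the first r columns of B (which are nonzero, so the quotient is well defined). -/
import Mathlib

open Matrix

/-- The Euclidean norm of a real vector. -/
noncomputable def euclNorm {n : Type*} [Fintype n] (v : n → ℝ) : ℝ :=
  Real.sqrt (v ⬝ᵥ v)

/-- The smallest singular value of a real matrix: the infimum of `‖M·x‖₂` over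
Euclidean-unit vectors `x`. -/
noncomputable def sigmaMin {m n : Type*} [Fintype m] [Fintype n]
    (M : Matrix m n ℝ) : ℝ :=
  sInf {t | ∃ x : n → ℝ, euclNorm x = 1 ∧ t = euclNorm (M *ᵥ x)}

/-- The Frobenius norm of a real matrix. -/
noncomputable def frobNorm {m n : Type*} [Fintype m] [Fintype n]
    (M : Matrix m n ℝ) : ℝ :=
  Real.sqrt (∑ i, ∑ j, M i j ^ 2)

section Helpers

variable {m n : Type*} [Fintype m] [Fintype n]

lemma dotProduct_self_eq_sum_sq (v : n → ℝ) : v ⬝ᵥ v = ∑ i, v i ^ 2 := by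
  simp [dotProduct, sq]

lemma euclNorm_eq_sqrt_sum_sq (v : n → ℝ) : euclNorm v = Real.sqrt (∑ i, v i ^ 2) := by
  rw [euclNorm, dotProduct_self_eq_sum_sq]

lemma euclNorm_nonneg (v : n → ℝ) : 0 ≤ euclNorm v := Real.sqrt_nonneg _

lemma frobNorm_nonneg (M : Matrix m n ℝ) : 0 ≤ frobNorm M := Real.sqrt_nonneg _

lemma euclNorm_smul (c : ℝ) (v : n → ℝ) : euclNorm (c • v) = |c| * euclNorm v := by
  rw [euclNorm_eq_sqrt_sum_sq, euclNorm_eq_sqrt_sum_sq]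
  have : ∑ i, (c • v) i ^ 2 = c ^ 2 * ∑ i, v i ^ 2 := by
    rw [Finset.mul_sum]; congr 1; ext i; simp [mul_pow]
  rw [this, Real.sqrt_mul (sq_nonneg c), Real.sqrt_sq_eq_abs]

lemma euclNorm_eq_zero_iff (v : n → ℝ) : euclNorm v = 0 ↔ v = 0 := by
  rw [euclNorm_eq_sqrt_sum_sq, Real.sqrt_eq_zero (by positivity)]
  constructor
  · intro h
    ext i
    have := (Finset.sum_eq_zero_iff_of_nonneg (fun i _ => sq_nonneg (v i))).1 h i
      (Finset.mem_univ i)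
    simpa using pow_eq_zero_iff (n := 2) (by norm_num) |>.1 this
  · intro h; simp [h]

lemma euclNorm_mulVec_le (M : Matrix m n ℝ) (x : n → ℝ) :
    euclNorm (M *ᵥ x) ≤ frobNorm M * euclNorm x := by
  rw [euclNorm_eq_sqrt_sum_sq, euclNorm_eq_sqrt_sum_sq, frobNorm,
    ← Real.sqrt_mul (by positivity)]
  apply Real.sqrt_le_sqrt
  rw [Finset.sum_mul]
  apply Finset.sum_le_sum
  intro i _
  calc (M *ᵥ x) i ^ 2 = (∑ j, M i j * x j) ^ 2 := by rfl
    _ ≤ (∑ j, M i j ^ 2) * ∑ j, x j ^ 2 :=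
        Finset.sum_mul_sq_le_sq_mul_sq _ _ _

lemma sigmaMin_nonneg (M : Matrix m n ℝ) : 0 ≤ sigmaMin M := by
  apply Real.sInf_nonneg
  rintro t ⟨x, _, rfl⟩
  exact euclNorm_nonneg _

lemma sigmaMin_le (M : Matrix m n ℝ) (x : n → ℝ) (hx : euclNorm x = 1) :
    sigmaMin M ≤ euclNorm (M *ᵥ x) := by
  apply csInf_le
  · exact ⟨0, by rintro t ⟨y, _, rfl⟩; exact euclNorm_nonneg _⟩
  · exact ⟨x, hx, rfl⟩

lemma le_sigmaMin (M : Matrix m n ℝ) (c : ℝ) (x₀ : n → ℝ) (hx₀ : euclNorm x₀ = 1)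
    (h : ∀ x : n → ℝ, euclNorm x = 1 → c ≤ euclNorm (M *ᵥ x)) : c ≤ sigmaMin M := by
  unfold sigmaMin
  refine le_csInf ⟨euclNorm (M *ᵥ x₀), ⟨x₀, hx₀, rfl⟩⟩ ?_
  rintro t ⟨x, hx, rfl⟩
  exact h x hx

lemma exists_unit_vector [Nonempty n] [DecidableEq n] : ∃ x : n → ℝ, euclNorm x = 1 := by
  refine ⟨Pi.single (Classical.arbitrary n) 1, ?_⟩
  rw [euclNorm_eq_sqrt_sum_sq]
  have : ∑ i, (Pi.single (Classical.arbitrary n) 1 : n → ℝ) i ^ 2 = 1 := by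
    rw [Finset.sum_eq_single (Classical.arbitrary n)]
    · simp
    · intro b _ hb; simp [Pi.single_eq_of_ne hb]
    · simp
  rw [this, Real.sqrt_one]

lemma sum_castLE_map {r n : ℕ} (h : r ≤ n) (f : Fin n → ℝ) :
    ∑ i : Fin r, f (Fin.castLE h i) = ∑ i ∈ Finset.univ.map (Fin.castLEEmb h), f i := by
  rw [Finset.sum_map]
  rfl

/-- sum over Fin n of a function vanishing past r equals sum over Fin r. -/
lemma sum_fin_eq_sum_castLE {r n : ℕ} (h : r ≤ n) (f : Fin n → ℝ)
    (hf : ∀ i : Fin n, r ≤ i.val → f i = 0) :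
    ∑ i, f i = ∑ i : Fin r, f (Fin.castLE h i) := by
  rw [sum_castLE_map]
  symm
  apply Finset.sum_subset (Finset.subset_univ _)
  intro i _ hi
  apply hf
  by_contra hc
  push_neg at hc
  exact hi (Finset.mem_map.2 ⟨⟨i.val, hc⟩, Finset.mem_univ _, rfl⟩)

lemma sum_castLE_le_sum {r n : ℕ} (h : r ≤ n) (f : Fin n → ℝ)
    (hf : ∀ i, 0 ≤ f i) :
    ∑ i : Fin r, f (Fin.castLE h i) ≤ ∑ i, f i := by
  rw [sum_castLE_map]
  exact Finset.sum_le_sum_of_subset_of_nonneg (Finset.subset_univ _)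
    (fun i _ _ => hf i)

end Helpers

/-- If `B = V·R` is a QR factorization (`V` orthogonal, `R` upper triangular)
and the leading `r×r` block of `R` is invertible, then
`σ_min(V(1:r,1:r)) ≥ σ_min(B(1:r,1:r)) / ‖B(1:n,1:r)‖_F`. -/
theorem qr_leading_block_sigma_min_bound {n : ℕ} (r : ℕ) (hr1 : 1 ≤ r) (hrn : r ≤ n)
    (B V R : Matrix (Fin n) (Fin n) ℝ)
    (hV : Vᵀ * V = 1) (hRtri : R.BlockTriangular id)
    (hQR : B = V * R)
    (hR11 : IsUnit (R.submatrix (Fin.castLE hrn) (Fin.castLE hrn))) :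
    sigmaMin (B.submatrix (Fin.castLE hrn) (Fin.castLE hrn)) /
        frobNorm (B.submatrix id (Fin.castLE hrn)) ≤
      sigmaMin (V.submatrix (Fin.castLE hrn) (Fin.castLE hrn)) := by
  haveI : NeZero r := ⟨by omega⟩
  set B1 := B.submatrix (Fin.castLE hrn) (Fin.castLE hrn) with hB1
  set V1 := V.submatrix (Fin.castLE hrn) (Fin.castLE hrn) with hV1
  set R1 := R.submatrix (Fin.castLE hrn) (Fin.castLE hrn) with hR1
  set F := frobNorm (B.submatrix id (Fin.castLE hrn)) with hF
  -- orthogonality preserves dot products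
  have hortho : ∀ w : Fin n → ℝ, (V *ᵥ w) ⬝ᵥ (V *ᵥ w) = w ⬝ᵥ w := by
    intro w
    rw [Matrix.dotProduct_mulVec, ← Matrix.mulVec_transpose, Matrix.mulVec_mulVec, hV,
      Matrix.one_mulVec]
  have hdet : IsUnit R1.det := (Matrix.isUnit_iff_isUnit_det R1).1 hR11
  -- B1 = V1 * R1
  have hfact : B1 = V1 * R1 := by
    ext i j
    have hz : ∀ k : Fin n, r ≤ k.val → V (Fin.castLE hrn i) k * R k (Fin.castLE hrn j) = 0 := by
      intro k hk
      have hlt : (Fin.castLE hrn j) < k := by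
        rw [Fin.lt_def]
        simp only [Fin.coe_castLE]
        omega
      exact mul_eq_zero_of_right _ (hRtri hlt)
    calc B1 i j = ∑ k : Fin n, V (Fin.castLE hrn i) k * R k (Fin.castLE hrn j) := by
          rw [hB1, Matrix.submatrix_apply, hQR]; rfl
      _ = ∑ k : Fin r, V (Fin.castLE hrn i) (Fin.castLE hrn k) *
            R (Fin.castLE hrn k) (Fin.castLE hrn j) := sum_fin_eq_sum_castLE hrn _ hz
      _ = (V1 * R1) i j := rfl
  -- V1 = B1 * R1⁻¹
  have hVeq : V1 = B1 * R1⁻¹ := by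
    rw [hfact, Matrix.mul_nonsing_inv_cancel_right _ _ hdet]
  -- F² = sum of squares of R's first-r columns
  have hFsq : F ^ 2 = ∑ j : Fin r, ∑ i : Fin n, R i (Fin.castLE hrn j) ^ 2 := by
    rw [hF, frobNorm, Real.sq_sqrt (by positivity), Finset.sum_comm]
    apply Finset.sum_congr rfl
    intro j _
    have step : ∑ i, (B.submatrix id (Fin.castLE hrn)) i j ^ 2
        = (V *ᵥ fun k => R k (Fin.castLE hrn j)) ⬝ᵥ (V *ᵥ fun k => R k (Fin.castLE hrn j)) := by
      rw [dotProduct_self_eq_sum_sq]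
      apply Finset.sum_congr rfl
      intro i _
      congr 1
      simp only [Matrix.submatrix_apply, id, hQR, Matrix.mul_apply, Matrix.mulVec, dotProduct]
    rw [step, hortho, dotProduct_self_eq_sum_sq]
  have hfrobR1 : frobNorm R1 ≤ F := by
    have h1 : frobNorm R1 ^ 2 ≤ F ^ 2 := by
      rw [hFsq, frobNorm, Real.sq_sqrt (by positivity), Finset.sum_comm]
      apply Finset.sum_le_sum
      intro j _
      exact sum_castLE_le_sum hrn (fun i => R i (Fin.castLE hrn j) ^ 2) (fun i => sq_nonneg _)
    exact le_of_pow_le_pow_left₀ two_ne_zero (by rw [hF]; exact frobNorm_nonneg _) h1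
  -- main argument
  obtain ⟨x₀, hx₀⟩ := exists_unit_vector (n := Fin r)
  apply le_sigmaMin _ _ x₀ hx₀
  intro x hx
  set y := R1⁻¹ *ᵥ x with hy
  have hRy : R1 *ᵥ y = x := by
    rw [hy, Matrix.mulVec_mulVec, Matrix.mul_nonsing_inv _ hdet, Matrix.one_mulVec]
  have hyne : y ≠ 0 := by
    intro h
    rw [h, Matrix.mulVec_zero] at hRy
    rw [← hRy, (euclNorm_eq_zero_iff (0 : Fin r → ℝ)).2 rfl] at hx
    norm_num at hx
  have hV1x : V1 *ᵥ x = B1 *ᵥ y := by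
    rw [hVeq, ← Matrix.mulVec_mulVec, hy]
  set c := euclNorm y with hc
  have hcpos : 0 < c :=
    lt_of_le_of_ne (euclNorm_nonneg y) fun h => hyne ((euclNorm_eq_zero_iff y).1 h.symm)
  set z := c⁻¹ • y with hz
  have hzn : euclNorm z = 1 := by
    rw [hz, euclNorm_smul, abs_of_pos (inv_pos.2 hcpos), ← hc, inv_mul_cancel₀ hcpos.ne']
  have hycz : y = c • z := by rw [hz, smul_smul, mul_inv_cancel₀ hcpos.ne', one_smul]
  have h2 : euclNorm (V1 *ᵥ x) = c * euclNorm (B1 *ᵥ z) := by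
    rw [hV1x, hycz, Matrix.mulVec_smul, euclNorm_smul, abs_of_pos hcpos]
  have h3 : 1 ≤ F * c := by
    calc (1:ℝ) = euclNorm x := hx.symm
      _ = euclNorm (R1 *ᵥ y) := by rw [hRy]
      _ ≤ frobNorm R1 * c := euclNorm_mulVec_le _ _
      _ ≤ F * c := mul_le_mul_of_nonneg_right hfrobR1 hcpos.le
  have hFnn : 0 ≤ F := by rw [hF]; exact frobNorm_nonneg _
  have hFpos : 0 < F := by nlinarith
  have h4 : 1 / F ≤ c := by
    rw [div_le_iff₀ hFpos]
    linarith
  calc sigmaMin B1 / F = sigmaMin B1 * (1 / F) := by ring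
    _ ≤ sigmaMin B1 * c := mul_le_mul_of_nonneg_left h4 (sigmaMin_nonneg _)
    _ ≤ euclNorm (B1 *ᵥ z) * c := mul_le_mul_of_nonneg_right (sigmaMin_le _ z hzn) hcpos.le
    _ = c * euclNorm (B1 *ᵥ z) := mul_comm _ _
    _ = euclNorm (V1 *ᵥ x) := h2.symm
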